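/- For every x ∈ 2 + 4ℤ₂ one has |f(x)|₂ = 4·|x|₂ = 2 > 1; consequently |f^[n](x)|₂ → ∞ as n → ∞, i.e. the disk 2 + 4ℤ₂ is contained in the attracting basin of ∞. -/
import Mathlib


open Function Filter

/-- The cubic polynomial `f(x) = (9/4)·x·(x−1)²` acting on `ℚ₂`. -/
noncomputable def f : ℚ_[2] → ℚ_[2] := fun x => (9 / 4 : ℚ_[2]) * x * (x - 1) ^ 2

lemma norm_nine : ‖(9 : ℚ_[2])‖ = 1 := by
  have h1 : ‖((9 : ℤ) : ℚ_[2])‖ ≤ 1 := Padic.norm_int_le_one 9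
  have h2 : ¬ ‖((9 : ℤ) : ℚ_[2])‖ < 1 := by
    rw [Padic.norm_intCast_lt_one_iff]
    decide
  push_neg at h2
  have : ‖((9 : ℤ) : ℚ_[2])‖ = 1 := le_antisymm h1 h2
  simpa using this

lemma norm_two : ‖(2 : ℚ_[2])‖ = 1 / 2 := by
  have := @Padic.norm_p 2 _
  simpa using this

lemma norm_coeff : ‖(9 / 4 : ℚ_[2])‖ = 4 := by
  have h4 : ‖(4 : ℚ_[2])‖ = 1 / 4 := by
    have : (4 : ℚ_[2]) = 2 ^ 2 := by norm_num
    rw [this, norm_pow, norm_two]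
    norm_num
  rw [norm_div, norm_nine, h4]
  norm_num

lemma norm_f (y : ℚ_[2]) : ‖f y‖ = 4 * ‖y‖ * ‖y - 1‖ ^ 2 := by
  show ‖(9 / 4 : ℚ_[2]) * y * (y - 1) ^ 2‖ = _
  rw [norm_mul, norm_mul, norm_pow, norm_coeff]

lemma key (y : ℚ_[2]) (hy : 2 ≤ ‖y‖) : 2 * ‖y‖ ≤ ‖f y‖ := by
  have h1 : ‖y - 1‖ = ‖y‖ := by
    have hne : ‖y‖ ≠ ‖(-1 : ℚ_[2])‖ := by
      rw [norm_neg, norm_one]; intro h; rw [h] at hy; linarith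
    calc ‖y - 1‖ = ‖y + (-1)‖ := by ring_nf
    _ = max ‖y‖ ‖(-1 : ℚ_[2])‖ := Padic.add_eq_max_of_ne hne
    _ = ‖y‖ := by rw [norm_neg, norm_one]; exact max_eq_left (by linarith)
  rw [norm_f, h1]
  nlinarith [norm_nonneg y]

/-- For every `x ∈ 2 + 4ℤ₂` one has `|f(x)|₂ = 4·|x|₂ = 2 > 1`; consequently
`|fⁿ(x)|₂ → ∞`, i.e. the disk `2 + 4ℤ₂` is contained in the attracting basin of `∞`. -/
theorem stmt1 (x : ℚ_[2]) (hx : ‖x - 2‖ ≤ (1 / 2 : ℝ) ^ 2) :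
    ‖f x‖ = 4 * ‖x‖ ∧ ‖f x‖ = 2 ∧ (1 : ℝ) < ‖f x‖ ∧
      Tendsto (fun n : ℕ => ‖f^[n] x‖) atTop atTop := by
  have hx' : ‖x - 2‖ ≤ 1 / 4 := by linarith [hx]
  have hnx : ‖x‖ = 1 / 2 := by
    have hne : ‖x - 2‖ ≠ ‖(2 : ℚ_[2])‖ := by
      rw [norm_two]; intro h; rw [h] at hx'; linarith
    have : ‖x‖ = max ‖x - 2‖ ‖(2 : ℚ_[2])‖ := by
      have := Padic.add_eq_max_of_ne hne
      simpa using this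
    rw [this, norm_two]
    exact max_eq_right (by linarith)
  have hnx1 : ‖x - 1‖ = 1 := by
    have hne : ‖x - 2‖ ≠ ‖(1 : ℚ_[2])‖ := by
      rw [norm_one]; intro h; rw [h] at hx'; linarith
    have : ‖x - 1‖ = max ‖x - 2‖ ‖(1 : ℚ_[2])‖ := by
      have := Padic.add_eq_max_of_ne hne
      have e : x - 2 + 1 = x - 1 := by ring
      rwa [e] at this
    rw [this, norm_one]
    exact max_eq_right (by linarith)
  have hfx : ‖f x‖ = 2 := by
    rw [norm_f, hnx, hnx1]; norm_num
  refine ⟨by rw [hfx, hnx]; norm_num, hfx, by rw [hfx]; norm_num, ?_⟩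
  have hbound : ∀ n : ℕ, (2 : ℝ) ^ (n + 1) ≤ ‖f^[n + 1] x‖ := by
    intro n
    induction n with
    | zero => simp [hfx]
    | succ k ih =>
      have h2 : 2 ≤ ‖f^[k + 1] x‖ := by
        calc (2 : ℝ) = 2 ^ 1 := by norm_num
        _ ≤ 2 ^ (k + 1) := pow_le_pow_right₀ one_le_two (by omega)
        _ ≤ _ := ih
      have := key _ h2
      calc (2 : ℝ) ^ (k + 2) = 2 * 2 ^ (k + 1) := by ring
      _ ≤ 2 * ‖f^[k + 1] x‖ := by linarith
      _ ≤ ‖f (f^[k + 1] x)‖ := this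
      _ = ‖f^[k + 2] x‖ := by simp [Function.iterate_succ_apply']
  refine tendsto_atTop_mono' atTop ?_ (tendsto_pow_atTop_atTop_of_one_lt (by norm_num : (1:ℝ) < 2))
  filter_upwards [eventually_ge_atTop 1] with n hn
  obtain ⟨m, rfl⟩ := Nat.exists_eq_add_of_le hn
  simpa [Nat.add_comm] using hbound m
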